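/- Let D ⊆ ℂ be a domain and φ : D → [0,∞) be of finite mean oscillation at a point z₀ ∈ D. Then there exists ε₀ ∈ (0, min(e^{-e}, d₀)), where d₀ = sup_{z∈D} |z−z₀|, such that ∫_{ε<|z−z₀|<ε₀} φ(z) / (|z−z₀| log(1/|z−z₀|))² dm(z) = O(log log(1/ε)) as ε → 0. -/

import Mathlib

open MeasureTheory Metric Filter Set
open scoped ENNReal Topology

/-- `φ` has finite mean oscillation at `z₀`. -/
def FMOAt (φ : ℂ → ℝ) (z₀ : ℂ) : Prop :=
  ∃ C : ℝ, ∀ᶠ ε in 𝓝[>] (0 : ℝ),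
    (⨍ z in ball z₀ ε, |φ z - ⨍ w in ball z₀ ε, φ w ∂volume| ∂volume) ≤ C

lemma vol_ball_toReal (z₀ : ℂ) (r : ℝ) (hr : 0 ≤ r) :
    (volume (ball z₀ r)).toReal = Real.pi * r ^ 2 := by
  rw [Complex.volume_ball, ← ENNReal.ofReal_pow hr, ENNReal.toReal_mul,
    ENNReal.toReal_ofReal (by positivity)]
  simp [mul_comm]

lemma avg_half (φ : ℂ → ℝ) (z₀ : ℂ) (ρ C : ℝ) (hρ : 0 < ρ)
    (hint : IntegrableOn φ (ball z₀ ρ) volume)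
    (hC : (⨍ z in ball z₀ ρ, |φ z - ⨍ w in ball z₀ ρ, φ w ∂volume| ∂volume) ≤ C) :
    (⨍ z in ball z₀ (ρ/2), φ z ∂volume) ≤ (⨍ z in ball z₀ ρ, φ z ∂volume) + 4*C := by
  set A := ⨍ w in ball z₀ ρ, φ w ∂volume with hA
  have hm1 : (volume (ball z₀ ρ)).toReal = Real.pi * ρ ^ 2 := vol_ball_toReal _ _ hρ.le
  have hm2 : (volume (ball z₀ (ρ/2))).toReal = Real.pi * (ρ/2) ^ 2 :=
    vol_ball_toReal _ _ (by linarith)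
  have hm1pos : 0 < (volume (ball z₀ ρ)).toReal := by rw [hm1]; positivity
  have hm2pos : 0 < (volume (ball z₀ (ρ/2))).toReal := by rw [hm2]; positivity
  have hsub : ball z₀ (ρ/2) ⊆ ball z₀ ρ := ball_subset_ball (by linarith)
  have hint2 : IntegrableOn (fun z => |φ z - A|) (ball z₀ ρ) volume :=
    (hint.sub (integrableOn_const measure_ball_lt_top.ne)).abs
  have hinth : IntegrableOn φ (ball z₀ (ρ/2)) volume := hint.mono_set hsub
  have hI : (∫ z in ball z₀ (ρ/2), |φ z - A| ∂volume) ≤ ∫ z in ball z₀ ρ, |φ z - A| ∂volume :=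
    setIntegral_mono_set hint2 (ae_of_all _ fun z => abs_nonneg _)
      (HasSubset.Subset.eventuallyLE hsub)
  have hfullavg : (∫ z in ball z₀ ρ, |φ z - A| ∂volume)
      = (volume (ball z₀ ρ)).toReal * ⨍ z in ball z₀ ρ, |φ z - A| ∂volume := by
    rw [setAverage_eq, measureReal_def, smul_eq_mul, ← mul_assoc, mul_inv_cancel₀ hm1pos.ne', one_mul]
  have hBA : (⨍ z in ball z₀ (ρ/2), φ z ∂volume) - A
      = ((volume (ball z₀ (ρ/2))).toReal)⁻¹ * ∫ z in ball z₀ (ρ/2), (φ z - A) ∂volume := by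
    rw [integral_sub hinth (integrableOn_const measure_ball_lt_top.ne),
      setIntegral_const, setAverage_eq, smul_eq_mul, smul_eq_mul, mul_sub, measureReal_def]
    field_simp
  have habs : |(⨍ z in ball z₀ (ρ/2), φ z ∂volume) - A|
      ≤ ((volume (ball z₀ (ρ/2))).toReal)⁻¹ * ∫ z in ball z₀ (ρ/2), |φ z - A| ∂volume := by
    rw [hBA, abs_mul, abs_of_nonneg (by positivity)]
    gcongr
    simpa [Real.norm_eq_abs] using
      norm_integral_le_integral_norm (μ := volume.restrict (ball z₀ (ρ/2))) (fun z => φ z - A)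
  have hratio : ((volume (ball z₀ (ρ/2))).toReal)⁻¹ * (volume (ball z₀ ρ)).toReal = 4 := by
    rw [hm1, hm2]; field_simp; ring
  have havgnn : (0:ℝ) ≤ ⨍ z in ball z₀ ρ, |φ z - A| ∂volume := by
    rw [setAverage_eq, smul_eq_mul]
    have : (0:ℝ) ≤ ∫ z in ball z₀ ρ, |φ z - A| ∂volume :=
      integral_nonneg fun z => abs_nonneg _
    positivity
  have key : |(⨍ z in ball z₀ (ρ/2), φ z ∂volume) - A| ≤ 4 * C := by
    calc |(⨍ z in ball z₀ (ρ/2), φ z ∂volume) - A|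
        ≤ ((volume (ball z₀ (ρ/2))).toReal)⁻¹ * ∫ z in ball z₀ (ρ/2), |φ z - A| ∂volume := habs
      _ ≤ ((volume (ball z₀ (ρ/2))).toReal)⁻¹ * ∫ z in ball z₀ ρ, |φ z - A| ∂volume := by
          gcongr
      _ = ((volume (ball z₀ (ρ/2))).toReal)⁻¹ * (volume (ball z₀ ρ)).toReal
            * ⨍ z in ball z₀ ρ, |φ z - A| ∂volume := by rw [hfullavg]; ring
      _ = 4 * ⨍ z in ball z₀ ρ, |φ z - A| ∂volume := by rw [hratio]
      _ ≤ 4 * C := by linarith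
  have := abs_le.1 key
  linarith [this.2]

lemma lintegral_biUnion_finset_le (f : ℂ → ℝ≥0∞) (s : ℕ → Set ℂ) (n : ℕ) :
    (∫⁻ z in ⋃ k ∈ Finset.range n, s k, f z) ≤ ∑ k ∈ Finset.range n, ∫⁻ z in s k, f z := by
  induction n with
  | zero => simp
  | succ n ih =>
    rw [Finset.range_add_one, Finset.sum_insert (by simp), Finset.set_biUnion_insert]
    calc (∫⁻ z in s n ∪ ⋃ k ∈ Finset.range n, s k, f z)
        ≤ (∫⁻ z in s n, f z) + ∫⁻ z in ⋃ k ∈ Finset.range n, s k, f z :=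
          lintegral_union_le _ _ _
      _ ≤ _ := add_le_add le_rfl ih

lemma sum_inv_le (n : ℕ) : ∑ k ∈ Finset.range n, ((k:ℝ)+1)⁻¹ ≤ 1 + Real.log n := by
  have := harmonic_le_one_add_log n
  have h2 : (harmonic n : ℝ) = ∑ k ∈ Finset.range n, ((k:ℝ)+1)⁻¹ := by
    simp [harmonic]
  linarith

set_option maxHeartbeats 2000000 in
theorem fmo_integral_estimate
    (D : Set ℂ) (hD : IsOpen D) (hDconn : IsConnected D)
    (φ : ℂ → ℝ) (hφpos : ∀ z ∈ D, 0 ≤ φ z)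
    (z₀ : ℂ) (hz₀ : z₀ ∈ D)
    (hint : ∃ r > 0, IntegrableOn φ (ball z₀ r) volume)
    (hfmo : FMOAt φ z₀) :
    ∃ ε₀ : ℝ, 0 < ε₀ ∧
      ENNReal.ofReal ε₀ <
        min (ENNReal.ofReal (Real.exp (-Real.exp 1))) (⨆ z ∈ D, edist z z₀) ∧
      ∃ C : ℝ, ∀ᶠ ε in 𝓝[>] (0 : ℝ),
        (∫⁻ z in D ∩ {z : ℂ | ε < dist z z₀ ∧ dist z z₀ < ε₀},
            ENNReal.ofReal (φ z / (dist z z₀ * Real.log (1 / dist z z₀)) ^ 2)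
            ∂volume)
          ≤ ENNReal.ofReal (C * Real.log (Real.log (1 / ε))) := by
  classical
  obtain ⟨r, hr, hintr⟩ := hint
  obtain ⟨r₁, hr₁, hball⟩ := Metric.isOpen_iff.1 hD z₀ hz₀
  obtain ⟨C₀, hC₀⟩ := hfmo
  set C := max C₀ 0 with hCdef
  have hC0 : 0 ≤ C := le_max_right _ _
  have hC₀' : ∀ᶠ ε in 𝓝[>] (0:ℝ),
      (⨍ z in ball z₀ ε, |φ z - ⨍ w in ball z₀ ε, φ w ∂volume| ∂volume) ≤ C :=
    hC₀.mono fun ε h => h.trans (le_max_left _ _)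
  obtain ⟨δ, hδmem, hδ⟩ := mem_nhdsGT_iff_exists_Ioo_subset.1 hC₀'
  have hδpos : 0 < δ := hδmem
  set E := Real.exp (-Real.exp 1) with hEdef
  have hEpos : 0 < E := Real.exp_pos _
  set ε₀ := min (min (r/2) (r₁/4)) (min (δ/2) (E/2)) with hε₀def
  have hε₀pos : 0 < ε₀ := by
    apply lt_min (lt_min (by linarith) (by linarith)) (lt_min (by linarith) (by linarith))
  have hε₀r : ε₀ < r := lt_of_le_of_lt (le_trans (min_le_left _ _) (min_le_left _ _)) (by linarith)
  have hε₀r₁ : ε₀ < r₁ := lt_of_le_of_lt (le_trans (min_le_left _ _) (min_le_right _ _)) (by linarith)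
  have hε₀δ : ε₀ < δ := lt_of_le_of_lt (le_trans (min_le_right _ _) (min_le_left _ _)) (by linarith)
  have hε₀E : ε₀ < E := lt_of_le_of_lt (le_trans (min_le_right _ _) (min_le_right _ _)) (by linarith)
  have hEe : E < Real.exp (-1) := by
    apply Real.exp_lt_exp.2
    have := Real.exp_one_gt_d9
    linarith
  have hε₀1 : ε₀ < 1 := by
    have : Real.exp (-1) < 1 := by
      rw [Real.exp_lt_one_iff]; norm_num
    linarith
  -- log (1/ε₀) ≥ 1
  have hmul1 : Real.exp 1 * Real.exp (-1) = 1 := by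
    rw [← Real.exp_add]; norm_num
  have hL1 : 1 ≤ Real.log (1/ε₀) := by
    rw [Real.le_log_iff_exp_le (by positivity), le_div_iff₀ hε₀pos]
    nlinarith [Real.exp_pos 1, hε₀E.trans hEe, Real.exp_pos (-1)]
  have hlog2 : (1:ℝ)/2 ≤ Real.log 2 := by
    have := Real.log_two_gt_d9
    linarith
  refine ⟨ε₀, hε₀pos, ?_, ?_⟩
  · refine lt_min ?_ ?_
    · exact (ENNReal.ofReal_lt_ofReal_iff hEpos).2 hε₀E
    · have hz₁ : (z₀ + ((r₁/2 : ℝ) : ℂ)) ∈ D := by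
        apply hball
        simp only [mem_ball, dist_eq_norm, add_sub_cancel_left]
        rw [Complex.norm_real, Real.norm_eq_abs, abs_of_nonneg (by linarith)]
        linarith
      calc ENNReal.ofReal ε₀ < ENNReal.ofReal (r₁/2) :=
            (ENNReal.ofReal_lt_ofReal_iff (by linarith)).2 (by
              have : ε₀ ≤ r₁/4 := le_trans (min_le_left _ _) (min_le_right _ _)
              linarith)
        _ = edist (z₀ + ((r₁/2 : ℝ) : ℂ)) z₀ := by
            rw [edist_dist, dist_eq_norm, add_sub_cancel_left, Complex.norm_real,
              Real.norm_eq_abs, abs_of_nonneg (by linarith)]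
        _ ≤ ⨆ z ∈ D, edist z z₀ := le_biSup (fun z => edist z z₀) hz₁
  -- main estimate
  set A : ℝ → ℝ := fun ρ => ⨍ z in ball z₀ ρ, φ z ∂volume with hAdef
  have hballD : ball z₀ ε₀ ⊆ D := (ball_subset_ball hε₀r₁.le).trans hball
  have hintρ : ∀ ρ : ℝ, ρ ≤ ε₀ → IntegrableOn φ (ball z₀ ρ) volume := fun ρ hρ =>
    hintr.mono_set (ball_subset_ball (by linarith))
  have hAnn : ∀ ρ : ℝ, ρ ≤ ε₀ → 0 ≤ A ρ := by
    intro ρ hρ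
    rw [hAdef]
    simp only [setAverage_eq, measureReal_def, smul_eq_mul]
    have h1 : (0:ℝ) ≤ ∫ z in ball z₀ ρ, φ z ∂volume :=
      setIntegral_nonneg measurableSet_ball fun z hz =>
        hφpos z (hballD (ball_subset_ball hρ hz))
    positivity
  have hchain : ∀ k : ℕ, A (ε₀ / 2^k) ≤ A ε₀ + 4*C*k := by
    intro k
    induction k with
    | zero => simp
    | succ k ih =>
      have h1 : (0:ℝ) < ε₀/2^k := by positivity
      have h2 : ε₀/2^k ≤ ε₀ := div_le_self hε₀pos.le (one_le_pow₀ one_le_two)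
      have hmem : ε₀/2^k ∈ Ioo (0:ℝ) δ := ⟨h1, lt_of_le_of_lt h2 hε₀δ⟩
      have hstep := avg_half φ z₀ (ε₀/2^k) C h1 (hintρ _ h2) (hδ hmem)
      have heq : ε₀/2^(k+1) = (ε₀/2^k)/2 := by rw [pow_succ]; ring
      rw [heq]
      push_cast
      calc A ((ε₀/2^k)/2) ≤ A (ε₀/2^k) + 4*C := hstep
        _ ≤ (A ε₀ + 4*C*k) + 4*C := by linarith
        _ = A ε₀ + 4*C*((k:ℝ)+1) := by ring
  have hIball : ∀ ρ : ℝ, 0 < ρ → ρ ≤ ε₀ →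
      (∫⁻ z in ball z₀ ρ, ENNReal.ofReal (φ z)) = ENNReal.ofReal (Real.pi * ρ^2 * A ρ) := by
    intro ρ h1 h2
    rw [← ofReal_integral_eq_lintegral_ofReal (hintρ ρ h2)
      ((ae_restrict_mem measurableSet_ball).mono fun z hz =>
        hφpos z (hballD (ball_subset_ball h2 hz)))]
    congr 1
    rw [hAdef]
    simp only [setAverage_eq, measureReal_def, smul_eq_mul]
    rw [vol_ball_toReal _ _ h1.le, ← mul_assoc, mul_inv_cancel₀ (by positivity), one_mul]
  set b := 16 * Real.pi * (A ε₀ + 4*C + 1) with hbdef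
  have hA0 := hAnn ε₀ le_rfl
  have hbpos : 0 < b := by
    have := Real.pi_pos
    nlinarith
  -- ring estimate
  have hring : ∀ k : ℕ, (∫⁻ z in D ∩ {z : ℂ | ε₀/2^(k+1) ≤ dist z z₀ ∧ dist z z₀ < ε₀/2^k},
      ENNReal.ofReal (φ z / (dist z z₀ * Real.log (1 / dist z z₀)) ^ 2))
      ≤ ENNReal.ofReal (b * ((k:ℝ)+1)⁻¹) := by
    intro k
    have hρk : (0:ℝ) < ε₀/2^k := by positivity
    have hρk1 : (0:ℝ) < ε₀/2^(k+1) := by positivity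
    have hρkε : ε₀/2^k ≤ ε₀ := div_le_self hε₀pos.le (one_le_pow₀ one_le_two)
    have hρhalf : ε₀/2^(k+1) = (ε₀/2^k)/2 := by rw [pow_succ]; ring
    have hLk : Real.log (1/(ε₀/2^k)) = k * Real.log 2 + Real.log (1/ε₀) := by
      rw [one_div, one_div, Real.log_inv, Real.log_inv,
        Real.log_div hε₀pos.ne' (by positivity), Real.log_pow]
      push_cast; ring
    have hLklb : ((k:ℝ)+1)/2 ≤ Real.log (1/(ε₀/2^k)) := by
      rw [hLk]
      have hk0 : (0:ℝ) ≤ (k:ℝ) := Nat.cast_nonneg k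
      nlinarith [hlog2, hL1]
    have hLkpos : 0 < Real.log (1/(ε₀/2^k)) := lt_of_lt_of_le (by positivity) hLklb
    set c := (((ε₀/2^(k+1)) * Real.log (1/(ε₀/2^k)))^2)⁻¹ with hcdef
    have hcpos : 0 < c := by positivity
    have hSmeas : MeasurableSet (D ∩ {z : ℂ | ε₀/2^(k+1) ≤ dist z z₀ ∧ dist z z₀ < ε₀/2^k}) := by
      apply hD.measurableSet.inter
      have hset : {z : ℂ | ε₀/2^(k+1) ≤ dist z z₀ ∧ dist z z₀ < ε₀/2^k}
          = {z : ℂ | ε₀/2^(k+1) ≤ dist z z₀} ∩ ball z₀ (ε₀/2^k) := by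
        ext w
        simp [mem_ball, Set.mem_setOf_eq]
      rw [hset]
      exact ((isClosed_le continuous_const
        (continuous_id.dist continuous_const)).measurableSet).inter measurableSet_ball
    have hpt : ∀ z ∈ D ∩ {z : ℂ | ε₀/2^(k+1) ≤ dist z z₀ ∧ dist z z₀ < ε₀/2^k},
        ENNReal.ofReal (φ z / (dist z z₀ * Real.log (1 / dist z z₀)) ^ 2)
          ≤ ENNReal.ofReal (c * φ z) := by
      rintro z ⟨hzD, hz1, hz2⟩
      apply ENNReal.ofReal_le_ofReal
      have hd : 0 < dist z z₀ := lt_of_lt_of_le hρk1 hz1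
      have hφz : 0 ≤ φ z := hφpos z hzD
      have hlogd : Real.log (1/(ε₀/2^k)) ≤ Real.log (1/dist z z₀) :=
        Real.log_le_log (by positivity) (one_div_le_one_div_of_le hd hz2.le)
      have hden : ((ε₀/2^(k+1)) * Real.log (1/(ε₀/2^k)))^2
          ≤ (dist z z₀ * Real.log (1/dist z z₀))^2 := by
        apply pow_le_pow_left₀ (by positivity)
        exact mul_le_mul hz1 hlogd hLkpos.le hd.le
      calc φ z / (dist z z₀ * Real.log (1/dist z z₀))^2
          ≤ φ z / ((ε₀/2^(k+1)) * Real.log (1/(ε₀/2^k)))^2 := by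
            gcongr
        _ = c * φ z := by rw [hcdef, div_eq_mul_inv, mul_comm]
    calc (∫⁻ z in D ∩ {z : ℂ | ε₀/2^(k+1) ≤ dist z z₀ ∧ dist z z₀ < ε₀/2^k},
            ENNReal.ofReal (φ z / (dist z z₀ * Real.log (1 / dist z z₀)) ^ 2))
        ≤ ∫⁻ z in D ∩ {z : ℂ | ε₀/2^(k+1) ≤ dist z z₀ ∧ dist z z₀ < ε₀/2^k},
            ENNReal.ofReal (c * φ z) :=
          lintegral_mono_ae ((ae_restrict_mem hSmeas).mono fun z hz => hpt z hz)
      _ ≤ ∫⁻ z in ball z₀ (ε₀/2^k), ENNReal.ofReal (c * φ z) := by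
          apply lintegral_mono_set
          rintro z ⟨hzD, hz1, hz2⟩
          exact mem_ball.2 hz2
      _ = ENNReal.ofReal c * ∫⁻ z in ball z₀ (ε₀/2^k), ENNReal.ofReal (φ z) := by
          simp_rw [ENNReal.ofReal_mul hcpos.le]
          exact lintegral_const_mul' _ _ ENNReal.ofReal_ne_top
      _ = ENNReal.ofReal (c * (Real.pi * (ε₀/2^k)^2 * A (ε₀/2^k))) := by
          rw [hIball _ hρk hρkε, ← ENNReal.ofReal_mul hcpos.le]
      _ ≤ ENNReal.ofReal (b * ((k:ℝ)+1)⁻¹) := by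
          apply ENNReal.ofReal_le_ofReal
          have hAk : A (ε₀/2^k) ≤ (A ε₀ + 4*C + 1) * ((k:ℝ)+1) := by
            have hch := hchain k
            have hk0 : (0:ℝ) ≤ (k:ℝ) := Nat.cast_nonneg k
            nlinarith [hA0, hC0]
          have hAknn : 0 ≤ A (ε₀/2^k) := hAnn _ hρkε
          have heq : c * (Real.pi * (ε₀/2^k)^2 * A (ε₀/2^k))
              = 4 * Real.pi * A (ε₀/2^k) / (Real.log (1/(ε₀/2^k)))^2 := by
            have key : ∀ p Lg a : ℝ, p ≠ 0 → Lg ≠ 0 →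
                (((p/2) * Lg)^2)⁻¹ * (Real.pi * p^2 * a) = 4*Real.pi*a/Lg^2 := by
              intro p Lg a hp hLg
              field_simp
              ring
            rw [hcdef, hρhalf]
            exact key _ _ _ hρk.ne' hLkpos.ne'
          rw [heq]
          have hdenle : (((k:ℝ)+1)/2)^2 ≤ (Real.log (1/(ε₀/2^k)))^2 :=
            pow_le_pow_left₀ (by positivity) hLklb 2
          have hb4 : 4 * Real.pi * A (ε₀/2^k) / (Real.log (1/(ε₀/2^k)))^2
              ≤ 4 * Real.pi * ((A ε₀ + 4*C + 1) * ((k:ℝ)+1)) / (((k:ℝ)+1)/2)^2 :=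
            div_le_div₀ (by positivity) (by nlinarith [Real.pi_pos]) (by positivity) hdenle
          have hfin : 4 * Real.pi * ((A ε₀ + 4*C + 1) * ((k:ℝ)+1)) / (((k:ℝ)+1)/2)^2
              = b * ((k:ℝ)+1)⁻¹ := by
            rw [hbdef]
            have : ((k:ℝ)+1) ≠ 0 := by positivity
            field_simp
            ring
          linarith [hb4, hfin.le, hfin.ge]
  refine ⟨5 * b, ?_⟩
  filter_upwards [Ioo_mem_nhdsGT_of_mem (show (0:ℝ) ∈ Ico (0:ℝ) ε₀ from ⟨le_rfl, hε₀pos⟩)]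
    with ε hε
  obtain ⟨hεpos, hεε₀⟩ := hε
  set x := Real.logb 2 (ε₀/ε) with hxdef
  have hxpos : 0 < x := Real.logb_pos (by norm_num) ((one_lt_div hεpos).2 hεε₀)
  set K := ⌈x⌉₊ with hKdef
  -- coverage
  have hcov : D ∩ {z : ℂ | ε < dist z z₀ ∧ dist z z₀ < ε₀} ⊆
      ⋃ k ∈ Finset.range (K+1),
        (D ∩ {z : ℂ | ε₀/2^(k+1) ≤ dist z z₀ ∧ dist z z₀ < ε₀/2^k}) := by
    rintro z ⟨hzD, hz1, hz2⟩
    set d := dist z z₀ with hddef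
    have hdpos : 0 < d := hεpos.trans hz1
    set y := Real.logb 2 (ε₀/d) with hydef
    have hypos : 0 < y := Real.logb_pos (by norm_num) ((one_lt_div hdpos).2 hz2)
    set n := ⌈y⌉₊ with hndef
    have hn1 : 1 ≤ n := Nat.one_le_iff_ne_zero.2 (by
      simp only [hndef, ne_eq, Nat.ceil_eq_zero, not_le]
      exact hypos)
    have hcast : ((n - 1 : ℕ) : ℝ) = (n:ℝ) - 1 := by
      rw [Nat.cast_sub hn1]; simp
    have hyx : y < x := by
      apply Real.logb_lt_logb (by norm_num)
      · positivity
      · exact div_lt_div_of_pos_left hε₀pos hεpos hz1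
    have hnK : n ≤ K := Nat.ceil_le_ceil hyx.le
    have hmemk : (n-1 : ℕ) ∈ Finset.range (K+1) := Finset.mem_range.2 (by omega)
    refine Set.mem_biUnion hmemk ⟨hzD, ?_, ?_⟩
    · -- ε₀/2^(n-1+1) ≤ d
      have h1 : y ≤ (n:ℝ) := Nat.le_ceil y
      have h2 : ε₀/d ≤ 2^(n:ℝ) := (Real.logb_le_iff_le_rpow (by norm_num) (by positivity)).1 h1
      rw [Real.rpow_natCast] at h2
      have h3 : (n - 1 : ℕ) + 1 = n := by omega
      rw [h3, div_le_iff₀ (by positivity)]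
      rw [div_le_iff₀ hdpos] at h2
      nlinarith [h2]
    · -- d < ε₀/2^(n-1)
      have h1 : ((n-1 : ℕ) : ℝ) < y := Nat.lt_ceil.1 (by omega)
      have h2 : (2:ℝ)^((n-1:ℕ):ℝ) < ε₀/d := (Real.lt_logb_iff_rpow_lt (by norm_num) (by positivity)).1 h1
      rw [Real.rpow_natCast] at h2
      rw [lt_div_iff₀ (by positivity)]
      rw [lt_div_iff₀ hdpos] at h2
      nlinarith [h2]
  -- facts about ε
  have hεE : ε < E := hεε₀.trans hε₀E
  have hlogε : Real.exp 1 < Real.log (1/ε) := by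
    rw [Real.lt_log_iff_exp_lt (by positivity), lt_div_iff₀ hεpos]
    have h := mul_lt_mul_of_pos_left hεE (Real.exp_pos (Real.exp 1))
    have hmul2 : Real.exp (Real.exp 1) * Real.exp (-Real.exp 1) = 1 := by
      rw [← Real.exp_add]; simp
    rw [← hEdef] at hmul2
    linarith
  have hloglogε : 1 < Real.log (Real.log (1/ε)) := by
    have h := Real.log_lt_log (Real.exp_pos 1) hlogε
    rwa [Real.log_exp] at h
  have hlogε1 : 1 ≤ Real.log (1/ε) := by
    have := Real.add_one_le_exp 1
    linarith
  -- the chain of inequalities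
  calc (∫⁻ z in D ∩ {z : ℂ | ε < dist z z₀ ∧ dist z z₀ < ε₀},
          ENNReal.ofReal (φ z / (dist z z₀ * Real.log (1 / dist z z₀)) ^ 2))
      ≤ ∫⁻ z in ⋃ k ∈ Finset.range (K+1),
          (D ∩ {z : ℂ | ε₀/2^(k+1) ≤ dist z z₀ ∧ dist z z₀ < ε₀/2^k}),
          ENNReal.ofReal (φ z / (dist z z₀ * Real.log (1 / dist z z₀)) ^ 2) :=
        lintegral_mono_set hcov
    _ ≤ ∑ k ∈ Finset.range (K+1), ∫⁻ z in
          (D ∩ {z : ℂ | ε₀/2^(k+1) ≤ dist z z₀ ∧ dist z z₀ < ε₀/2^k}),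
          ENNReal.ofReal (φ z / (dist z z₀ * Real.log (1 / dist z z₀)) ^ 2) :=
        lintegral_biUnion_finset_le _ _ _
    _ ≤ ∑ k ∈ Finset.range (K+1), ENNReal.ofReal (b * ((k:ℝ)+1)⁻¹) :=
        Finset.sum_le_sum fun k _ => hring k
    _ = ENNReal.ofReal (∑ k ∈ Finset.range (K+1), b * ((k:ℝ)+1)⁻¹) :=
        (ENNReal.ofReal_sum_of_nonneg fun k _ => by positivity).symm
    _ ≤ ENNReal.ofReal (5 * b * Real.log (Real.log (1/ε))) := by
        apply ENNReal.ofReal_le_ofReal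
        have hsum : ∑ k ∈ Finset.range (K+1), b * ((k:ℝ)+1)⁻¹
            ≤ b * (1 + Real.log (K+1)) := by
          rw [← Finset.mul_sum]
          have h := sum_inv_le (K+1)
          push_cast at h ⊢
          nlinarith [hbpos.le, h]
        have hK1 : ((K:ℝ)+1) ≤ 4 * Real.log (1/ε) := by
          have h1 : (K:ℝ) < x + 1 := Nat.ceil_lt_add_one hxpos.le
          have h2 : x ≤ 2 * Real.log (ε₀/ε) := by
            rw [hxdef, Real.logb, div_le_iff₀ (by positivity : (0:ℝ) < Real.log 2)]
            nlinarith [Real.log_nonneg ((one_le_div hεpos).2 hεε₀.le)]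
          have h3 : Real.log (ε₀/ε) ≤ Real.log (1/ε) := by
            apply Real.log_le_log (by positivity)
            exact div_le_div₀ zero_le_one hε₀1.le hεpos le_rfl
          linarith
        have hlogK : Real.log ((K:ℝ)+1) ≤ 3 + Real.log (Real.log (1/ε)) := by
          calc Real.log ((K:ℝ)+1) ≤ Real.log (4 * Real.log (1/ε)) := by
                apply Real.log_le_log (by positivity) hK1
            _ = Real.log 4 + Real.log (Real.log (1/ε)) := by
                rw [Real.log_mul (by norm_num) (by linarith)]
            _ ≤ 3 + Real.log (Real.log (1/ε)) := by
                have : Real.log 4 ≤ 4 - 1 := Real.log_le_sub_one_of_pos (by norm_num)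
                linarith
        push_cast at hsum
        nlinarith [hbpos.le, hloglogε]
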